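/- With the CGMY data below, define β₁ʳ := C·Y·Γ(-Y)·(M̃ + G̃)·sin(Yπ/2) and, for t > 0, L₁₂(t) := (β₁ʳ/π)·t·∫₀^∞ w^{Y-1}·(1 - exp(-σ_Y·t·w^Y))/(w² + 1/4) dw. Then lim_{t→0⁺} L₁₂(t)/t^{2/Y} = a₁₂, where a₁₂ := -(β₁ʳ/(π·Y))·σ_Y^{(2-Y)/Y}·Γ(1 - 2/Y). -/

import Mathlib

open MeasureTheory Filter Topology Complex Set

/-- The stable scale coefficient `σ_Y = 2·C·Γ(-Y)·|cos(πY/2)|`. -/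
noncomputable def sigmaY (C Y : ℝ) : ℝ :=
  2 * C * Real.Gamma (-Y) * |Real.cos (Real.pi * Y / 2)|

/-- The martingale drift `b̃`. -/
noncomputable def btilde (C G M Y : ℝ) : ℝ :=
  -(C * Real.Gamma (-Y) * ((M - 1) ^ Y + (G + 1) ^ Y - M ^ Y - G ^ Y))

/-- The constant `κ = b̃/2 - C·Γ(-Y)·(M^Y + G^Y)`. -/
noncomputable def kappaC (C G M Y : ℝ) : ℝ :=
  btilde C G M Y / 2 - C * Real.Gamma (-Y) * (M ^ Y + G ^ Y)

/-- The limiting stable exponent `θ₀(u) = -σ_Y·|u|^Y`. -/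
noncomputable def theta0 (C Y : ℝ) (u : ℝ) : ℝ :=
  -(sigmaY C Y) * |u| ^ Y

/-- The contour-shifted characteristic exponent `ψ₀`. -/
noncomputable def psi0 (C G M Y : ℝ) (v : ℝ) : ℂ :=
  Complex.I * (v : ℂ) * ((btilde C G M Y : ℝ) : ℂ) + ((kappaC C G M Y : ℝ) : ℂ)
    + ((C * Real.Gamma (-Y) : ℝ) : ℂ) *
      ((((M - 1/2 : ℝ) : ℂ) - Complex.I * (v : ℂ)) ^ (Y : ℂ)
        + (((G + 1/2 : ℝ) : ℂ) + Complex.I * (v : ℂ)) ^ (Y : ℂ))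

/-- The rescaled exponent `θ(t,v)` in the Lipton–Lewis representation. -/
noncomputable def thetaT (C G M Y : ℝ) (t v : ℝ) : ℂ :=
  Complex.I * (v : ℂ) * ((btilde C G M Y : ℝ) : ℂ) * ((t ^ (1 - 1/Y) : ℝ) : ℂ)
    + ((kappaC C G M Y : ℝ) : ℂ) * (t : ℂ)
    + ((C * Real.Gamma (-Y) : ℝ) : ℂ) *
      (((((M - 1/2) * t ^ (1/Y) : ℝ) : ℂ) - Complex.I * (v : ℂ)) ^ (Y : ℂ)
        + ((((G + 1/2) * t ^ (1/Y) : ℝ) : ℂ) + Complex.I * (v : ℂ)) ^ (Y : ℂ))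

/-- The normalized Lipton–Lewis ATM factor `L(t)`. -/
noncomputable def LLfn (C G M Y : ℝ) (t : ℝ) : ℝ :=
  (1 / Real.pi) *
    (∫ v in Set.Ioi (0 : ℝ),
      (1 - Complex.exp (thetaT C G M Y t v)) / (((v ^ 2 + t ^ (2/Y) / 4 : ℝ)) : ℂ)).re

/-- The first-order coefficient `d₁`. -/
noncomputable def dOne (C Y : ℝ) : ℝ :=
  (1 / Real.pi) * Real.Gamma (1 - 1/Y) * (sigmaY C Y) ^ (1/Y)

/-- The second-order coefficient `d₂`. -/
noncomputable def dTwo (C G M Y : ℝ) : ℝ :=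
  (1 / Real.pi) * ∫ w in Set.Ioi (0 : ℝ),
    ((w ^ 2 + 1/4) * theta0 C Y w - w ^ 2 * (psi0 C G M Y w).re) / (w ^ 2 * (w ^ 2 + 1/4))

/-- The binomial Laplace integral `L₁₂(t)` satisfies
`L₁₂(t)/t^{2/Y} → a₁₂ = -(β₁ʳ/(πY))·σ_Y^{(2-Y)/Y}·Γ(1-2/Y)` as `t → 0⁺`,
where `β₁ʳ = C·Y·Γ(-Y)·(M̃+G̃)·sin(Yπ/2)`. -/

private lemma exp_aux1 {x : ℝ} : 1 - Real.exp (-x) ≤ x := by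
  have := Real.add_one_le_exp (-x); linarith

private lemma exp_aux0 {x : ℝ} (hx : 0 ≤ x) : 0 ≤ 1 - Real.exp (-x) := by
  have : Real.exp (-x) ≤ Real.exp 0 := Real.exp_le_exp.mpr (by linarith)
  simp only [Real.exp_zero] at this; linarith

private lemma integrable_aux1 {a : ℝ} (ha1 : -1 < a) (ha0 : a < 0) :
    IntegrableOn (fun x : ℝ => x ^ (a-1) * (1 - Real.exp (-x))) (Set.Ioi 0) := by
  have hmeas : ∀ s : Set ℝ,
      AEStronglyMeasurable (fun x : ℝ => x ^ (a-1) * (1 - Real.exp (-x)))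
        (volume.restrict s) := by
    intro s; apply Measurable.aestronglyMeasurable; fun_prop
  rw [← Set.Ioc_union_Ioi_eq_Ioi (zero_le_one)]
  apply IntegrableOn.union
  · have hb : IntegrableOn (fun x : ℝ => x ^ a) (Set.Ioc (0:ℝ) 1) := by
      have := intervalIntegral.intervalIntegrable_rpow' (a := (0:ℝ)) (b := 1) ha1
      rwa [intervalIntegrable_iff_integrableOn_Ioc_of_le zero_le_one] at this
    apply hb.mono' (hmeas _)
    filter_upwards [ae_restrict_mem measurableSet_Ioc] with x hx
    obtain ⟨hx0, hx1⟩ := hx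
    rw [Real.norm_eq_abs,
      _root_.abs_of_nonneg (mul_nonneg (Real.rpow_nonneg hx0.le _) (exp_aux0 hx0.le))]
    calc x ^ (a-1) * (1 - Real.exp (-x)) ≤ x ^ (a-1) * x :=
          mul_le_mul_of_nonneg_left exp_aux1 (Real.rpow_nonneg hx0.le _)
      _ = x ^ a := by rw [← Real.rpow_add_one hx0.ne', sub_add_cancel]
  · have hb := integrableOn_Ioi_rpow_of_lt (show a - 1 < -1 by linarith) one_pos
    apply hb.mono' (hmeas _)
    filter_upwards [ae_restrict_mem measurableSet_Ioi] with x hx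
    have hx0 : (0:ℝ) < x := lt_trans one_pos hx
    rw [Real.norm_eq_abs,
      _root_.abs_of_nonneg (mul_nonneg (Real.rpow_nonneg hx0.le _) (exp_aux0 hx0.le))]
    have h1 : 1 - Real.exp (-x) ≤ 1 := by have := (Real.exp_pos (-x)).le; linarith
    calc x ^ (a-1) * (1 - Real.exp (-x)) ≤ x ^ (a-1) * 1 :=
          mul_le_mul_of_nonneg_left h1 (Real.rpow_nonneg hx0.le _)
      _ = x ^ (a-1) := mul_one _

private lemma integrable_aux2 {σ Y : ℝ} (hσ : 0 < σ) (hY1 : 1 < Y) (hY2 : Y < 2) :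
    IntegrableOn (fun u : ℝ => u ^ (Y-3) * (1 - Real.exp (-(σ * u ^ Y)))) (Set.Ioi 0) := by
  have hmeas : ∀ s : Set ℝ,
      AEStronglyMeasurable (fun u : ℝ => u ^ (Y-3) * (1 - Real.exp (-(σ * u ^ Y))))
        (volume.restrict s) := by
    intro s; apply Measurable.aestronglyMeasurable; fun_prop
  rw [← Set.Ioc_union_Ioi_eq_Ioi (zero_le_one)]
  apply IntegrableOn.union
  · have hb : IntegrableOn (fun x : ℝ => σ * x ^ (2*Y-3)) (Set.Ioc (0:ℝ) 1) := by
      have := intervalIntegral.intervalIntegrable_rpow' (a := (0:ℝ)) (b := 1)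
        (show (-1:ℝ) < 2*Y-3 by linarith)
      rw [intervalIntegrable_iff_integrableOn_Ioc_of_le zero_le_one] at this
      exact this.const_mul σ
    apply hb.mono' (hmeas _)
    filter_upwards [ae_restrict_mem measurableSet_Ioc] with x hx
    obtain ⟨hx0, hx1⟩ := hx
    have hsx : 0 ≤ σ * x ^ Y := mul_nonneg hσ.le (Real.rpow_nonneg hx0.le _)
    rw [Real.norm_eq_abs,
      _root_.abs_of_nonneg (mul_nonneg (Real.rpow_nonneg hx0.le _) (exp_aux0 hsx))]
    calc x ^ (Y-3) * (1 - Real.exp (-(σ * x ^ Y))) ≤ x ^ (Y-3) * (σ * x ^ Y) :=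
          mul_le_mul_of_nonneg_left exp_aux1 (Real.rpow_nonneg hx0.le _)
      _ = σ * x ^ (2*Y-3) := by
          rw [show (2*Y-3 : ℝ) = (Y-3) + Y by ring, Real.rpow_add hx0]; ring
  · have hb := integrableOn_Ioi_rpow_of_lt (show Y - 3 < -1 by linarith) one_pos
    apply hb.mono' (hmeas _)
    filter_upwards [ae_restrict_mem measurableSet_Ioi] with x hx
    have hx0 : (0:ℝ) < x := lt_trans one_pos hx
    have hsx : 0 ≤ σ * x ^ Y := mul_nonneg hσ.le (Real.rpow_nonneg hx0.le _)
    rw [Real.norm_eq_abs,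
      _root_.abs_of_nonneg (mul_nonneg (Real.rpow_nonneg hx0.le _) (exp_aux0 hsx))]
    have h1 : 1 - Real.exp (-(σ * x ^ Y)) ≤ 1 := by
      have := (Real.exp_pos (-(σ * x ^ Y))).le; linarith
    calc x ^ (Y-3) * (1 - Real.exp (-(σ * x ^ Y))) ≤ x ^ (Y-3) * 1 :=
          mul_le_mul_of_nonneg_left h1 (Real.rpow_nonneg hx0.le _)
      _ = x ^ (Y-3) := mul_one _
private lemma gammaB {a : ℝ} (ha1 : -1 < a) (ha0 : a < 0) :
    ∫ x in Set.Ioi (0:ℝ), x ^ (a-1) * (1 - Real.exp (-x)) = -Real.Gamma a := by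
  have ha : a ≠ 0 := ha0.ne
  have ha1' : (0:ℝ) < a + 1 := by linarith
  have hu : ∀ x ∈ Set.Ioi (0:ℝ),
      HasDerivAt (fun x : ℝ => 1 - Real.exp (-x)) (Real.exp (-x)) x := by
    intro x _
    simpa using ((Real.hasDerivAt_exp (-x)).comp x (hasDerivAt_neg x)).const_sub 1
  have hv : ∀ x ∈ Set.Ioi (0:ℝ),
      HasDerivAt (fun x : ℝ => x ^ a / a) (x ^ (a-1)) x := by
    intro x hx
    have := (Real.hasDerivAt_rpow_const (p := a) (Or.inl (ne_of_gt hx))).div_const a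
    simpa [mul_div_cancel_left₀ _ ha] using this
  have huv' : IntegrableOn ((fun x : ℝ => 1 - Real.exp (-x)) * fun x : ℝ => x ^ (a-1))
      (Set.Ioi 0) := by
    apply (integrable_aux1 ha1 ha0).congr_fun _ measurableSet_Ioi
    intro x _; exact (mul_comm _ _)
  have hu'v : IntegrableOn ((fun x : ℝ => Real.exp (-x)) * fun x : ℝ => x ^ a / a)
      (Set.Ioi 0) := by
    have h : IntegrableOn (fun x : ℝ => Real.exp (-x) * x ^ (a+1-1) / a) (Set.Ioi 0) :=
      (Real.GammaIntegral_convergent ha1').div_const a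
    apply h.congr_fun _ measurableSet_Ioi
    intro x _
    simp [Pi.mul_apply, add_sub_cancel_right, mul_div_assoc]
  have h0 : Tendsto ((fun x : ℝ => 1 - Real.exp (-x)) * fun x : ℝ => x ^ a / a)
      (𝓝[>] (0:ℝ)) (𝓝 0) := by
    have hsq : Tendsto (fun x : ℝ => (1 - Real.exp (-x)) * x ^ a) (𝓝[>] (0:ℝ)) (𝓝 0) := by
      apply squeeze_zero' (g := fun x : ℝ => x ^ (a+1))
      · filter_upwards [self_mem_nhdsWithin] with x hx
        exact mul_nonneg (exp_aux0 (le_of_lt hx)) (Real.rpow_nonneg (le_of_lt hx) _)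
      · filter_upwards [self_mem_nhdsWithin] with x hx
        calc (1 - Real.exp (-x)) * x ^ a ≤ x * x ^ a :=
              mul_le_mul_of_nonneg_right exp_aux1 (Real.rpow_nonneg (le_of_lt hx) _)
          _ = x ^ (a+1) := by
              rw [Real.rpow_add_one (ne_of_gt hx), mul_comm]
      · have h := (Real.continuousAt_rpow_const 0 (a+1) (Or.inr ha1'.le)).tendsto
        rw [Real.zero_rpow ha1'.ne'] at h
        exact h.mono_left nhdsWithin_le_nhds
    have := hsq.div_const a
    show Tendsto (fun x : ℝ => (1 - Real.exp (-x)) * (x ^ a / a)) _ _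
    simpa [Pi.mul_apply, mul_div_assoc] using this
  have hinf : Tendsto ((fun x : ℝ => 1 - Real.exp (-x)) * fun x : ℝ => x ^ a / a)
      atTop (𝓝 0) := by
    have h1 : Tendsto (fun x : ℝ => 1 - Real.exp (-x)) atTop (𝓝 1) := by
      simpa using tendsto_const_nhds.sub Real.tendsto_exp_neg_atTop_nhds_zero
    have h2 : Tendsto (fun x : ℝ => x ^ a / a) atTop (𝓝 0) := by
      have := (tendsto_rpow_neg_atTop (show (0:ℝ) < -a by linarith)).div_const a
      simpa using this
    show Tendsto (fun x : ℝ => (1 - Real.exp (-x)) * (x ^ a / a)) _ _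
    simpa using h1.mul h2
  have key := integral_Ioi_mul_deriv_eq_deriv_mul hu hv huv' hu'v h0 hinf
  have hgamma : ∫ x in Set.Ioi (0:ℝ), Real.exp (-x) * (x ^ a / a) = Real.Gamma a := by
    have h1 : ∫ x in Set.Ioi (0:ℝ), Real.exp (-x) * (x ^ a / a)
        = (∫ x in Set.Ioi (0:ℝ), Real.exp (-x) * x ^ a) / a := by
      rw [← integral_div]
      exact setIntegral_congr_fun measurableSet_Ioi (fun x _ => (mul_div_assoc _ _ _).symm)
    have h2 : Real.Gamma (a + 1) = ∫ x in Set.Ioi (0:ℝ), Real.exp (-x) * x ^ a := by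
      simpa [add_sub_cancel_right] using Real.Gamma_eq_integral ha1'
    rw [h1, ← h2, Real.Gamma_add_one ha, mul_div_cancel_left₀ _ ha]
  calc ∫ x in Set.Ioi (0:ℝ), x ^ (a-1) * (1 - Real.exp (-x))
      = ∫ x in Set.Ioi (0:ℝ), (1 - Real.exp (-x)) * x ^ (a-1) :=
        setIntegral_congr_fun measurableSet_Ioi (fun x _ => (mul_comm _ _))
    _ = 0 - 0 - ∫ x in Set.Ioi (0:ℝ), Real.exp (-x) * (x ^ a / a) := key
    _ = -Real.Gamma a := by rw [hgamma]; ring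
private lemma keyval {σ Y : ℝ} (hσ : 0 < σ) (hY1 : 1 < Y) (hY2 : Y < 2) :
    ∫ u in Set.Ioi (0:ℝ), u ^ (Y-3) * (1 - Real.exp (-(σ * u ^ Y)))
      = -(σ ^ ((2-Y)/Y) * Real.Gamma (1 - 2/Y) / Y) := by
  have hY0 : (0:ℝ) < Y := by linarith
  have hYne : Y ≠ 0 := hY0.ne'
  -- step K : unscaled integral
  have hK : ∫ v in Set.Ioi (0:ℝ), v ^ (Y-3) * (1 - Real.exp (-v ^ Y))
      = -(Real.Gamma (1-2/Y) / Y) := by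
    have hsub := integral_comp_rpow_Ioi_of_pos
      (g := fun y : ℝ => (1/Y) * (y ^ ((1-2/Y)-1) * (1 - Real.exp (-y)))) hY0
    have hcongr : ∀ x ∈ Set.Ioi (0:ℝ),
        (Y * x ^ (Y-1)) • ((1/Y) * ((x ^ Y) ^ ((1-2/Y)-1) * (1 - Real.exp (-x ^ Y))))
          = x ^ (Y-3) * (1 - Real.exp (-x ^ Y)) := by
      intro x hx
      have hx0 : (0:ℝ) < x := hx
      have h1 : (x ^ Y) ^ ((1-2/Y)-1) = x ^ (-2 : ℝ) := by
        rw [← Real.rpow_mul hx0.le]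
        congr 1
        field_simp
        ring
      rw [smul_eq_mul, h1]
      rw [show x ^ (Y-3) = x ^ (Y-1) * x ^ (-2:ℝ) by
        rw [← Real.rpow_add hx0]; ring_nf]
      field_simp
    rw [setIntegral_congr_fun measurableSet_Ioi hcongr] at hsub
    rw [hsub, integral_const_mul]
    have ha1 : (-1:ℝ) < 1 - 2/Y := by
      have : 2/Y < 2 := by rw [div_lt_iff₀ hY0]; linarith
      linarith
    have ha0 : (1:ℝ) - 2/Y < 0 := by
      have : 1 < 2/Y := by rw [lt_div_iff₀ hY0]; linarith
      linarith
    rw [gammaB ha1 ha0]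
    field_simp
  -- step scale : c = σ^(1/Y)
  set c := σ ^ (1/Y : ℝ) with hcdef
  have hc : 0 < c := Real.rpow_pos_of_pos hσ _
  have hcY : c ^ Y = σ := by
    rw [hcdef, ← Real.rpow_mul hσ.le, one_div_mul_cancel hYne, Real.rpow_one]
  have hsub := integral_comp_mul_left_Ioi
    (g := fun v : ℝ => v ^ (Y-3) * (1 - Real.exp (-v ^ Y))) 0 hc
  rw [mul_zero] at hsub
  have hcongr : ∀ x ∈ Set.Ioi (0:ℝ),
      (c * x) ^ (Y-3) * (1 - Real.exp (-(c * x) ^ Y))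
        = c ^ (Y-3) * (x ^ (Y-3) * (1 - Real.exp (-(σ * x ^ Y)))) := by
    intro x hx
    have hx0 : (0:ℝ) < x := hx
    rw [Real.mul_rpow hc.le hx0.le, Real.mul_rpow hc.le hx0.le, hcY]
    ring
  rw [setIntegral_congr_fun measurableSet_Ioi hcongr, integral_const_mul, hK,
    smul_eq_mul] at hsub
  -- hsub : c ^ (Y-3) * ∫ = c⁻¹ * -(Γ/Y)
  have hne : c ^ (Y-3 : ℝ) ≠ 0 := (Real.rpow_pos_of_pos hc _).ne'
  have hL : ∫ u in Set.Ioi (0:ℝ), u ^ (Y-3) * (1 - Real.exp (-(σ * u ^ Y)))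
      = (c ^ (Y-3:ℝ))⁻¹ * (c⁻¹ * -(Real.Gamma (1-2/Y) / Y)) := by
    field_simp at hsub ⊢
    linarith [hsub]
  rw [hL]
  have hcpow : (c ^ (Y-3:ℝ))⁻¹ * c⁻¹ = σ ^ ((2-Y)/Y) := by
    rw [← Real.rpow_neg hc.le, ← Real.rpow_neg_one c, ← Real.rpow_add hc, hcdef,
      ← Real.rpow_mul hσ.le]
    congr 1
    field_simp
    ring
  rw [← mul_assoc, hcpow]
  ring
private lemma dctlem {σ Y : ℝ} (hσ : 0 < σ) (hY1 : 1 < Y) (hY2 : Y < 2) :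
    Tendsto (fun t : ℝ => ∫ u in Set.Ioi (0:ℝ),
        u ^ (Y-1) * (1 - Real.exp (-(σ * u ^ Y))) / (u ^ 2 + t ^ (2/Y : ℝ) / 4))
      (𝓝[>] 0)
      (𝓝 (∫ u in Set.Ioi (0:ℝ), u ^ (Y-3) * (1 - Real.exp (-(σ * u ^ Y))))) := by
  apply tendsto_integral_filter_of_dominated_convergence
    (bound := fun u : ℝ => u ^ (Y-3) * (1 - Real.exp (-(σ * u ^ Y))))
  · filter_upwards with t
    apply Measurable.aestronglyMeasurable; fun_prop
  · filter_upwards [self_mem_nhdsWithin] with t ht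
    filter_upwards [ae_restrict_mem measurableSet_Ioi] with u hu
    have hu0 : (0:ℝ) < u := hu
    have ht0 : (0:ℝ) < t := ht
    have hnum : 0 ≤ u ^ (Y-1) * (1 - Real.exp (-(σ * u ^ Y))) :=
      mul_nonneg (Real.rpow_nonneg hu0.le _)
        (exp_aux0 (mul_nonneg hσ.le (Real.rpow_nonneg hu0.le _)))
    have hden : (0:ℝ) < u ^ 2 := by positivity
    have hden2 : (0:ℝ) < u ^ 2 + t ^ (2/Y : ℝ) / 4 := by positivity
    rw [Real.norm_eq_abs, _root_.abs_of_nonneg (div_nonneg hnum hden2.le)]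
    have hsplit : u ^ (Y-1) = u ^ (Y-3) * u ^ 2 := by
      rw [← Real.rpow_natCast u 2, ← Real.rpow_add hu0]
      congr 1; push_cast; ring
    calc u ^ (Y-1) * (1 - Real.exp (-(σ * u ^ Y))) / (u ^ 2 + t ^ (2/Y : ℝ) / 4)
        ≤ u ^ (Y-1) * (1 - Real.exp (-(σ * u ^ Y))) / u ^ 2 := by
          gcongr
          linarith [Real.rpow_nonneg ht0.le (2/Y : ℝ)]
      _ = u ^ (Y-3) * (1 - Real.exp (-(σ * u ^ Y))) := by
          rw [hsplit]; field_simp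
  · exact integrable_aux2 hσ hY1 hY2
  · filter_upwards [ae_restrict_mem measurableSet_Ioi] with u hu
    have hu0 : (0:ℝ) < u := hu
    have hden : (0:ℝ) < u ^ 2 := by positivity
    have hT : Tendsto (fun t : ℝ => t ^ (2/Y : ℝ)) (𝓝[>] (0:ℝ)) (𝓝 0) := by
      have h := (Real.continuousAt_rpow_const 0 (2/Y) (Or.inr (by positivity))).tendsto
      rw [Real.zero_rpow (by positivity : (2/Y : ℝ) ≠ 0)] at h
      exact h.mono_left nhdsWithin_le_nhds
    have hD : Tendsto (fun t : ℝ => u ^ 2 + t ^ (2/Y : ℝ) / 4) (𝓝[>] (0:ℝ))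
        (𝓝 (u ^ 2)) := by
      have h := (tendsto_const_nhds : Tendsto (fun _ : ℝ => (u:ℝ) ^ 2) (𝓝[>] (0:ℝ)) _).add
        (hT.div_const 4)
      simpa using h
    have := (tendsto_const_nhds (x := u ^ (Y-1) * (1 - Real.exp (-(σ * u ^ Y))))).div hD hden.ne'
    convert this using 2
    · rfl
    rw [show u ^ (Y-1) = u ^ (Y-3) * u ^ 2 by
      rw [← Real.rpow_natCast u 2, ← Real.rpow_add hu0]; congr 1; push_cast; ring]
    field_simp

private lemma covlem {σ Y : ℝ} (hY1 : 1 < Y) (hY2 : Y < 2) {t : ℝ} (ht : 0 < t) :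
    t * (∫ w in Set.Ioi (0:ℝ),
        w ^ (Y-1) * (1 - Real.exp (-σ * t * w ^ Y)) / (w ^ 2 + 1/4)) / t ^ (2/Y : ℝ)
      = ∫ u in Set.Ioi (0:ℝ),
        u ^ (Y-1) * (1 - Real.exp (-(σ * u ^ Y))) / (u ^ 2 + t ^ (2/Y : ℝ) / 4) := by
  have hY0 : (0:ℝ) < Y := by linarith
  have hYne : Y ≠ 0 := hY0.ne'
  set c := t ^ (1/Y : ℝ) with hcdef
  have hc : 0 < c := Real.rpow_pos_of_pos ht _
  have hcY : c ^ Y = t := by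
    rw [hcdef, ← Real.rpow_mul ht.le, one_div_mul_cancel hYne, Real.rpow_one]
  have hc2 : c ^ 2 = t ^ (2/Y : ℝ) := by
    rw [hcdef, ← Real.rpow_natCast (t ^ (1/Y:ℝ)) 2, ← Real.rpow_mul ht.le]
    congr 1; push_cast; ring
  have hsub := integral_comp_mul_left_Ioi
    (g := fun u : ℝ => u ^ (Y-1) * (1 - Real.exp (-(σ * u ^ Y)))
      / (u ^ 2 + t ^ (2/Y : ℝ) / 4)) 0 hc
  rw [mul_zero] at hsub
  have hcongr : ∀ w ∈ Set.Ioi (0:ℝ),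
      (c * w) ^ (Y-1) * (1 - Real.exp (-(σ * (c * w) ^ Y)))
          / ((c * w) ^ 2 + t ^ (2/Y : ℝ) / 4)
        = t ^ ((Y-3)/Y : ℝ) *
          (w ^ (Y-1) * (1 - Real.exp (-σ * t * w ^ Y)) / (w ^ 2 + 1/4)) := by
    intro w hw
    have hw0 : (0:ℝ) < w := hw
    have h1 : (c * w) ^ (Y-1) = c ^ (Y-1 : ℝ) * w ^ (Y-1) := Real.mul_rpow hc.le hw0.le
    have h2 : (c * w) ^ Y = t * w ^ Y := by
      rw [Real.mul_rpow hc.le hw0.le, hcY]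
    have h3 : (c * w) ^ 2 + t ^ (2/Y:ℝ) / 4 = t ^ (2/Y:ℝ) * (w ^ 2 + 1/4) := by
      rw [mul_pow, hc2]; ring
    have h4 : c ^ (Y-1 : ℝ) = t ^ ((Y-3)/Y : ℝ) * t ^ (2/Y : ℝ) := by
      rw [← Real.rpow_add ht, hcdef, ← Real.rpow_mul ht.le]
      congr 1
      field_simp
      ring
    rw [h1, h2, h3, h4]
    have hden : (0:ℝ) < w ^ 2 + 1/4 := by positivity
    have htp : (0:ℝ) < t ^ (2/Y : ℝ) := Real.rpow_pos_of_pos ht _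
    rw [show -(σ * (t * w ^ Y)) = -σ * t * w ^ Y by ring]
    field_simp
  rw [setIntegral_congr_fun measurableSet_Ioi hcongr, integral_const_mul,
    smul_eq_mul] at hsub
  have hfac : t / t ^ (2/Y : ℝ) = c * t ^ ((Y-3)/Y : ℝ) := by
    rw [hcdef, ← Real.rpow_add ht,
      show t / t ^ (2/Y:ℝ) = t ^ (1:ℝ) / t ^ (2/Y:ℝ) by rw [Real.rpow_one],
      ← Real.rpow_sub ht]
    congr 1
    field_simp
    ring
  calc t * (∫ w in Set.Ioi (0:ℝ),
        w ^ (Y-1) * (1 - Real.exp (-σ * t * w ^ Y)) / (w ^ 2 + 1/4)) / t ^ (2/Y : ℝ)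
      = (t / t ^ (2/Y : ℝ)) * (∫ w in Set.Ioi (0:ℝ),
        w ^ (Y-1) * (1 - Real.exp (-σ * t * w ^ Y)) / (w ^ 2 + 1/4)) := by ring
    _ = c * (t ^ ((Y-3)/Y : ℝ) * (∫ w in Set.Ioi (0:ℝ),
        w ^ (Y-1) * (1 - Real.exp (-σ * t * w ^ Y)) / (w ^ 2 + 1/4))) := by
        rw [hfac]; ring
    _ = c * (c⁻¹ * ∫ u in Set.Ioi (0:ℝ),
        u ^ (Y-1) * (1 - Real.exp (-(σ * u ^ Y))) / (u ^ 2 + t ^ (2/Y : ℝ) / 4)) := by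
        rw [hsub]
    _ = _ := by
        rw [← mul_assoc, mul_inv_cancel₀ hc.ne', one_mul]

lemma sigmaY_pos {C Y : ℝ} (hC : 0 < C) (hY1 : 1 < Y) (hY2 : Y < 2) :
    0 < sigmaY C Y := by
  have hπ := Real.pi_pos
  have hG2 : 0 < Real.Gamma (2 - Y) := Real.Gamma_pos_of_pos (by linarith)
  have h1 : Real.Gamma (-Y + 1) = -Y * Real.Gamma (-Y) :=
    Real.Gamma_add_one (by intro h; rw [neg_eq_zero] at h; linarith)
  have h2 : Real.Gamma ((1 - Y) + 1) = (1 - Y) * Real.Gamma (1 - Y) :=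
    Real.Gamma_add_one (sub_ne_zero.mpr (by linarith : (1:ℝ) ≠ Y))
  have h2' : Real.Gamma (2 - Y) = (1 - Y) * (-Y) * Real.Gamma (-Y) := by
    rw [show (2 - Y : ℝ) = (1 - Y) + 1 by ring, h2, show (1 - Y : ℝ) = -Y + 1 by ring, h1]
    ring
  have hΓ : 0 < Real.Gamma (-Y) := by
    by_contra h
    push_neg at h
    have hk : 0 < (1 - Y) * -Y := by nlinarith
    have hle : (1 - Y) * -Y * Real.Gamma (-Y) ≤ 0 :=
      mul_nonpos_of_nonneg_of_nonpos hk.le h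
    linarith
  have hcos : Real.cos (Real.pi * Y / 2) < 0 := by
    apply Real.cos_neg_of_pi_div_two_lt_of_lt <;> nlinarith
  have habs : 0 < |Real.cos (Real.pi * Y / 2)| := abs_pos.mpr hcos.ne
  unfold sigmaY
  positivity

theorem stmt11 (C G M Y : ℝ) (hC : 0 < C) (hG : 0 ≤ G) (hM : 1 < M)
    (hY1 : 1 < Y) (hY2 : Y < 2) :
    Tendsto
      (fun t : ℝ =>
        ((C * Y * Real.Gamma (-Y) * ((M - 1/2) + (G + 1/2)) * Real.sin (Y * Real.pi / 2))
            / Real.pi) * t *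
          (∫ w in Set.Ioi (0 : ℝ),
            w ^ (Y - 1) * (1 - Real.exp (-(sigmaY C Y) * t * w ^ Y)) / (w ^ 2 + 1/4))
          / t ^ (2/Y))
      (𝓝[>] 0)
      (𝓝 (-((C * Y * Real.Gamma (-Y) * ((M - 1/2) + (G + 1/2)) * Real.sin (Y * Real.pi / 2))
          / (Real.pi * Y)) * (sigmaY C Y) ^ ((2 - Y)/Y) * Real.Gamma (1 - 2/Y))) := by
  have hσ : 0 < sigmaY C Y := sigmaY_pos hC hY1 hY2
  have hπ : (0:ℝ) < Real.pi := Real.pi_pos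
  have hY0 : (0:ℝ) < Y := by linarith
  set β := C * Y * Real.Gamma (-Y) * ((M - 1/2) + (G + 1/2)) * Real.sin (Y * Real.pi / 2)
    with hβ
  have hlim := (dctlem hσ hY1 hY2).const_mul (β / Real.pi)
  rw [keyval hσ hY1 hY2] at hlim
  have hconst : β / Real.pi * -(sigmaY C Y ^ ((2-Y)/Y) * Real.Gamma (1 - 2/Y) / Y)
      = -(β / (Real.pi * Y)) * (sigmaY C Y) ^ ((2 - Y)/Y) * Real.Gamma (1 - 2/Y) := by
    field_simp
  rw [hconst] at hlim
  apply hlim.congr'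
  filter_upwards [self_mem_nhdsWithin] with t ht
  rw [← covlem hY1 hY2 ht]
  ring
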